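/- Let t ≥ 1 and let F be a t-intersecting family of subsets of [n]. If n + t is even then |F| ≤ Σ_{i=(n+t)/2}^{n} C(n, i); if n + t is odd then |F| ≤ Σ_{i=(n+t+1)/2}^{n} C(n, i) + C(n-1, (n+t-1)/2). -/

import Mathlib

open Finset
open scoped FinsetFamily

namespace KatonaProof

variable {𝒜 ℬ : Finset (Finset ℕ)} {G : Finset ℕ} {k t d : ℕ}

/-- members of the shadow are subsets of members. -/
lemma shadow_subset_ground (hG : ∀ A ∈ 𝒜, A ⊆ G) : ∀ S ∈ ∂ 𝒜, S ⊆ G := by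
  intro S hS
  obtain ⟨A, hA, hSA⟩ := Finset.exists_subset_of_mem_shadow hS
  exact hSA.trans (hG A hA)

lemma shadow_iterate_subset_ground (hG : ∀ A ∈ 𝒜, A ⊆ G) : ∀ S ∈ ∂^[d] 𝒜, S ⊆ G := by
  intro S hS
  rw [Finset.mem_shadow_iterate_iff_exists_sdiff] at hS
  obtain ⟨A, hA, hSA, -⟩ := hS
  exact hSA.trans (hG A hA)

lemma sized_shadow_iterate (hs : ∀ A ∈ 𝒜, A.card = k) (hd : d ≤ k) :
    ∀ S ∈ ∂^[d] 𝒜, S.card = k - d := by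
  intro S hS
  rw [Finset.mem_shadow_iterate_iff_exists_sdiff] at hS
  obtain ⟨A, hA, hSA, hcard⟩ := hS
  have := Finset.card_sdiff_of_subset hSA
  have := Finset.card_le_card hSA
  have := hs A hA
  omega

lemma shadow_iterate_mono (h : 𝒜 ⊆ ℬ) : ∂^[d] 𝒜 ⊆ ∂^[d] ℬ := by
  induction d with
  | zero => exact h
  | succ d ih =>
    rw [Function.iterate_succ_apply', Function.iterate_succ_apply']
    exact Finset.shadow_mono ih

/-- Bounded local LYM. -/
lemma local_lym_ground (hG : ∀ A ∈ ℬ, A ⊆ G) (hs : ∀ A ∈ ℬ, A.card = k) (hk : 1 ≤ k) :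
    ℬ.card * k ≤ (∂ ℬ).card * (G.card - k + 1) := by
  classical
  set P : Finset (Finset ℕ × ℕ) := ℬ.biUnion (fun B => B.image (fun b => (B, b))) with hP
  set Q : Finset (Finset ℕ × ℕ) := (∂ ℬ).biUnion (fun S => (G \ S).image (fun b => (S, b))) with hQ
  have hPcard : P.card = ℬ.card * k := by
    rw [hP, Finset.card_biUnion]
    · rw [Finset.sum_congr rfl (fun B hB => ?_), Finset.sum_const, smul_eq_mul]
      rw [Finset.card_image_of_injective _ (fun a b hab => (Prod.mk.injEq _ _ _ _ ▸ hab).2)]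
      exact hs B hB
    · intro B hB C hC hBC
      simp only [Finset.disjoint_left, Finset.mem_image]
      rintro p ⟨b, hb, rfl⟩ ⟨c, hc, hpc⟩
      exact hBC (Prod.mk.injEq _ _ _ _ ▸ hpc).1.symm
  have hQcard : Q.card = (∂ ℬ).card * (G.card - k + 1) := by
    rw [hQ, Finset.card_biUnion]
    · rw [Finset.sum_congr rfl (fun S hS => ?_), Finset.sum_const, smul_eq_mul]
      rw [Finset.card_image_of_injective _ (fun a b hab => (Prod.mk.injEq _ _ _ _ ▸ hab).2)]
      have h1 : S ⊆ G := shadow_subset_ground hG S hS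
      have h2 : S.card = k - 1 := by
        have := Set.Sized.shadow (fun A hA => hs A hA) (Finset.mem_coe.2 hS)
        exact this
      rw [Finset.card_sdiff_of_subset h1, h2]
      obtain ⟨B, hBmem, hSB⟩ := Finset.exists_subset_of_mem_shadow hS
      have h3 : B.card ≤ G.card := Finset.card_le_card (hG B hBmem)
      have h4 := hs B hBmem
      omega
    · intro B hB C hC hBC
      simp only [Finset.disjoint_left, Finset.mem_image]
      rintro p ⟨b, hb, rfl⟩ ⟨c, hc, hpc⟩
      exact hBC (Prod.mk.injEq _ _ _ _ ▸ hpc).1.symm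
  rw [← hPcard, ← hQcard]
  apply Finset.card_le_card_of_injOn (fun p => (p.1.erase p.2, p.2))
  · intro p hp
    simp only [hP, Finset.mem_coe, Finset.mem_biUnion, Finset.mem_image] at hp
    obtain ⟨B, hB, b, hb, rfl⟩ := hp
    simp only [hQ, Finset.mem_coe, Finset.mem_biUnion, Finset.mem_image]
    exact ⟨B.erase b, Finset.erase_mem_shadow hB hb,
      b, Finset.mem_sdiff.2 ⟨hG B hB hb, Finset.notMem_erase _ _⟩, rfl⟩
  · intro p hp q hq hpq
    simp only [hP, Finset.mem_coe, Finset.mem_biUnion, Finset.mem_image] at hp hq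
    obtain ⟨B, hB, b, hb, rfl⟩ := hp
    obtain ⟨C, hC, c, hc, rfl⟩ := hq
    simp only [Prod.mk.injEq] at hpq ⊢
    obtain ⟨h1, rfl⟩ := hpq
    refine ⟨?_, rfl⟩
    have : B = insert b (B.erase b) := (Finset.insert_erase hb).symm
    rw [this, h1, Finset.insert_erase hc]

variable {𝒜 ℬ : Finset (Finset ℕ)} {G : Finset ℕ} {k t d : ℕ}

lemma lym_chain (hG : ∀ A ∈ 𝒜, A ⊆ G) (hs : ∀ A ∈ 𝒜, A.card = k) (hd : d ≤ k) :
    𝒜.card * ∏ i ∈ Finset.range d, (k - i) ≤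
      (∂^[d] 𝒜).card * ∏ i ∈ Finset.range d, (G.card - (k - i) + 1) := by
  induction d with
  | zero => simp
  | succ d ih =>
    have hd' : d ≤ k := Nat.le_of_succ_le hd
    have H1 := ih hd'
    have H2 : (∂^[d] 𝒜).card * (k - d) ≤ (∂^[d+1] 𝒜).card * (G.card - (k - d) + 1) := by
      rw [Function.iterate_succ_apply']
      exact local_lym_ground (shadow_iterate_subset_ground hG) (sized_shadow_iterate hs hd')
        (by omega)
    calc 𝒜.card * ∏ i ∈ Finset.range (d+1), (k - i)
        = (𝒜.card * ∏ i ∈ Finset.range d, (k - i)) * (k - d) := by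
          rw [Finset.prod_range_succ, mul_assoc]
      _ ≤ ((∂^[d] 𝒜).card * ∏ i ∈ Finset.range d, (G.card - (k - i) + 1)) * (k - d) :=
          Nat.mul_le_mul_right _ H1
      _ = ((∂^[d] 𝒜).card * (k - d)) * ∏ i ∈ Finset.range d, (G.card - (k - i) + 1) := by ring
      _ ≤ ((∂^[d+1] 𝒜).card * (G.card - (k - d) + 1)) *
            ∏ i ∈ Finset.range d, (G.card - (k - i) + 1) := Nat.mul_le_mul_right _ H2
      _ = (∂^[d+1] 𝒜).card * ∏ i ∈ Finset.range (d+1), (G.card - (k - i) + 1) := by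
          rw [Finset.prod_range_succ]; ring

lemma katona_shadow_small (hG : ∀ A ∈ 𝒜, A ⊆ G) (hs : ∀ A ∈ 𝒜, A.card = k)
    (ht : 1 ≤ t) (htk : t ≤ k) (hsmall : G.card + t ≤ 2 * k) :
    𝒜.card ≤ (∂^[t-1] 𝒜).card := by
  rcases Finset.eq_empty_or_nonempty 𝒜 with rfl | ⟨A, hA⟩
  · simp
  have hkG : k ≤ G.card := by
    rw [← hs A hA]; exact Finset.card_le_card (hG A hA)
  have hchain := lym_chain hG hs (show t - 1 ≤ k by omega)
  have hP2P1 : ∏ i ∈ Finset.range (t-1), (G.card - (k - i) + 1) ≤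
      ∏ i ∈ Finset.range (t-1), (k - i) := by
    rw [← Finset.prod_range_reflect (fun i => G.card - (k - i) + 1) (t-1)]
    apply Finset.prod_le_prod'
    intro j hj
    rw [Finset.mem_range] at hj
    omega
  have hP1pos : 0 < ∏ i ∈ Finset.range (t-1), (k - i) := by
    apply Finset.prod_pos
    intro i hi
    rw [Finset.mem_range] at hi
    omega
  have : 𝒜.card * ∏ i ∈ Finset.range (t-1), (k - i) ≤
      (∂^[t-1] 𝒜).card * ∏ i ∈ Finset.range (t-1), (k - i) :=
    hchain.trans (Nat.mul_le_mul_left _ hP2P1)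
  exact Nat.le_of_mul_le_mul_right this hP1pos

variable {𝒜 : Finset (Finset ℕ)} {G A B : Finset ℕ} {i j k t d : ℕ}

/-- Weight of a family, used as termination measure for shifting. -/
def ω (𝒜 : Finset (Finset ℕ)) : ℕ := ∑ A ∈ 𝒜, ∑ x ∈ A, x

lemma compress_eq (hij : i ≠ j) (hiA : i ∉ A) (hjA : j ∈ A) :
    UV.compress {i} {j} A = insert i (A.erase j) := by
  rw [UV.compress_of_disjoint_of_le (Finset.disjoint_singleton_left.2 hiA)
    (Finset.singleton_subset_iff.2 hjA)]
  ext x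
  simp only [Finset.sup_eq_union, Finset.mem_sdiff, Finset.mem_union, Finset.mem_singleton,
    Finset.mem_insert, Finset.mem_erase]
  constructor
  · rintro ⟨h1 | rfl, h2⟩
    · exact Or.inr ⟨h2, h1⟩
    · exact Or.inl rfl
  · rintro (rfl | ⟨h1, h2⟩)
    · exact ⟨Or.inr rfl, hij⟩
    · exact ⟨Or.inl h2, h1⟩

lemma compress_moved (h : UV.compress (α := Finset ℕ) {i} {j} B ≠ B) : i ∉ B ∧ j ∈ B := by
  by_contra hc
  apply h
  rw [UV.compress, if_neg]
  rintro ⟨h1, h2⟩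
  rw [Finset.disjoint_singleton_left] at h1
  have h2' : j ∈ B := h2 (Finset.mem_singleton_self j)
  exact hc ⟨h1, h2'⟩

lemma compress_subset (hA : A ∈ UV.compression {i} {j} 𝒜) (hG : ∀ C ∈ 𝒜, C ⊆ G) (hi : i ∈ G) :
    A ⊆ G := by
  rw [UV.mem_compression] at hA
  rcases hA with ⟨h1, -⟩ | ⟨-, b, hb, rfl⟩
  · exact hG A h1
  · by_cases h : UV.compress {i} {j} b = b
    · rw [h]; exact hG b hb
    · obtain ⟨hib, hjb⟩ := compress_moved h
      by_cases hij : i = j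
      · subst hij; exact absurd hjb hib
      rw [compress_eq hij hib hjb]
      intro x hx
      rw [Finset.mem_insert] at hx
      rcases hx with rfl | hx
      · exact hi
      · exact hG b hb (Finset.mem_of_mem_erase hx)

lemma compress_sized (hs : ∀ C ∈ 𝒜, C.card = k) :
    ∀ C ∈ UV.compression {i} {j} 𝒜, C.card = k := by
  intro C hC
  rw [UV.mem_compression] at hC
  rcases hC with ⟨h1, -⟩ | ⟨-, b, hb, rfl⟩
  · exact hs C h1
  · by_cases h : UV.compress {i} {j} b = b
    · rw [h]; exact hs b hb
    · obtain ⟨hib, hjb⟩ := compress_moved h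
      by_cases hij : i = j
      · subst hij; exact absurd hjb hib
      rw [compress_eq hij hib hjb, Finset.card_insert_of_notMem
        (fun hx => hib (Finset.mem_of_mem_erase hx)), Finset.card_erase_of_mem hjb]
      have : 1 ≤ b.card := Finset.card_pos.2 ⟨j, hjb⟩
      rw [← hs b hb]
      omega

/-- key cross-case for preservation of t-intersecting. -/
lemma cross_case (hij : i ≠ j) (hint : ∀ C ∈ 𝒜, ∀ D ∈ 𝒜, t ≤ (C ∩ D).card)
    (hA : A ∈ 𝒜) (hAc : UV.compress {i} {j} A ∈ 𝒜) (hB : B ∈ 𝒜) (hiB : i ∉ B) (hjB : j ∈ B) :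
    t ≤ (A ∩ insert i (B.erase j)).card := by
  by_cases hjA : j ∈ A
  · by_cases hiA : i ∈ A
    · -- i, j ∈ A
      have hsub : insert i ((A ∩ B).erase j) ⊆ A ∩ insert i (B.erase j) := by
        intro x hx
        rw [Finset.mem_insert, Finset.mem_erase] at hx
        rw [Finset.mem_inter, Finset.mem_insert]
        rcases hx with rfl | ⟨hxj, hx⟩
        · exact ⟨hiA, Or.inl rfl⟩
        · rw [Finset.mem_inter] at hx
          exact ⟨hx.1, Or.inr (Finset.mem_erase.2 ⟨hxj, hx.2⟩)⟩
      have hcard : (insert i ((A ∩ B).erase j)).card = (A ∩ B).card := by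
        rw [Finset.card_insert_of_notMem (fun hx =>
          hiB (Finset.mem_inter.1 (Finset.mem_of_mem_erase hx)).2),
          Finset.card_erase_of_mem (Finset.mem_inter.2 ⟨hjA, hjB⟩)]
        have : 1 ≤ (A ∩ B).card := Finset.card_pos.2 ⟨j, Finset.mem_inter.2 ⟨hjA, hjB⟩⟩
        omega
      calc t ≤ (A ∩ B).card := hint A hA B hB
        _ = (insert i ((A ∩ B).erase j)).card := hcard.symm
        _ ≤ (A ∩ insert i (B.erase j)).card := Finset.card_le_card hsub
    · -- j ∈ A, i ∉ A : use that the compression of A is in 𝒜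
      rw [compress_eq hij hiA hjA] at hAc
      have h1 : (insert i (A.erase j)) ∩ B = (A ∩ B).erase j := by
        ext x
        simp only [Finset.mem_inter, Finset.mem_insert, Finset.mem_erase]
        constructor
        · rintro ⟨rfl | ⟨hxj, hxA⟩, hxB⟩
          · exact absurd hxB hiB
          · exact ⟨hxj, hxA, hxB⟩
        · rintro ⟨hxj, hxA, hxB⟩
          exact ⟨Or.inr ⟨hxj, hxA⟩, hxB⟩
      have h2 : t ≤ ((A ∩ B).erase j).card := by
        rw [← h1]; exact hint _ hAc B hB
      have h3 : A ∩ insert i (B.erase j) = (A ∩ B).erase j := by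
        ext x
        simp only [Finset.mem_inter, Finset.mem_insert, Finset.mem_erase]
        constructor
        · rintro ⟨hxA, rfl | ⟨hxj, hxB⟩⟩
          · exact absurd hxA hiA
          · exact ⟨hxj, hxA, hxB⟩
        · rintro ⟨hxj, hxA, hxB⟩
          exact ⟨hxA, Or.inr ⟨hxj, hxB⟩⟩
      rw [h3]; exact h2
  · -- j ∉ A
    have hsub : A ∩ B ⊆ A ∩ insert i (B.erase j) := by
      intro x hx
      rw [Finset.mem_inter] at hx
      rw [Finset.mem_inter, Finset.mem_insert]
      exact ⟨hx.1, Or.inr (Finset.mem_erase.2 ⟨fun h => hjA (h ▸ hx.1), hx.2⟩)⟩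
    exact (hint A hA B hB).trans (Finset.card_le_card hsub)

lemma tint_compression (hij : i ≠ j) (hint : ∀ C ∈ 𝒜, ∀ D ∈ 𝒜, t ≤ (C ∩ D).card) :
    ∀ C ∈ UV.compression {i} {j} 𝒜, ∀ D ∈ UV.compression {i} {j} 𝒜, t ≤ (C ∩ D).card := by
  intro C hC D hD
  rw [UV.mem_compression] at hC hD
  rcases hC with ⟨hC1, hC2⟩ | ⟨hCn, b, hb, rfl⟩
  · rcases hD with ⟨hD1, hD2⟩ | ⟨hDn, c, hc, rfl⟩
    · exact hint C hC1 D hD1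
    · have hcc : UV.compress {i} {j} c ≠ c := fun h => hDn (by rw [h]; exact hc)
      obtain ⟨hic, hjc⟩ := compress_moved hcc
      rw [compress_eq hij hic hjc]
      exact cross_case hij hint hC1 hC2 hc hic hjc
  · rcases hD with ⟨hD1, hD2⟩ | ⟨hDn, c, hc, rfl⟩
    · have hbb : UV.compress {i} {j} b ≠ b := fun h => hCn (by rw [h]; exact hb)
      obtain ⟨hib, hjb⟩ := compress_moved hbb
      rw [compress_eq hij hib hjb, Finset.inter_comm]
      have hint' : ∀ C ∈ 𝒜, ∀ D ∈ 𝒜, t ≤ (C ∩ D).card := hint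
      exact cross_case hij hint hD1 hD2 hb hib hjb
    · have hbb : UV.compress {i} {j} b ≠ b := fun h => hCn (by rw [h]; exact hb)
      have hcc : UV.compress {i} {j} c ≠ c := fun h => hDn (by rw [h]; exact hc)
      obtain ⟨hib, hjb⟩ := compress_moved hbb
      obtain ⟨hic, hjc⟩ := compress_moved hcc
      rw [compress_eq hij hib hjb, compress_eq hij hic hjc]
      have heq : insert i (b.erase j) ∩ insert i (c.erase j) = insert i ((b ∩ c).erase j) := by
        ext x
        simp only [Finset.mem_inter, Finset.mem_insert, Finset.mem_erase]
        constructor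
        · rintro ⟨rfl | ⟨h1, h2⟩, h3⟩
          · exact Or.inl rfl
          · rcases h3 with rfl | ⟨h4, h5⟩
            · exact Or.inl rfl
            · exact Or.inr ⟨h1, h2, h5⟩
        · rintro (rfl | ⟨h1, h2, h3⟩)
          · exact ⟨Or.inl rfl, Or.inl rfl⟩
          · exact ⟨Or.inr ⟨h1, h2⟩, Or.inr ⟨h1, h3⟩⟩
      rw [heq, Finset.card_insert_of_notMem (fun hx =>
        hib (Finset.mem_inter.1 (Finset.mem_of_mem_erase hx)).1),
        Finset.card_erase_of_mem (Finset.mem_inter.2 ⟨hjb, hjc⟩)]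
      have h1 : 1 ≤ (b ∩ c).card := Finset.card_pos.2 ⟨j, Finset.mem_inter.2 ⟨hjb, hjc⟩⟩
      have := hint b hb c hc
      omega

variable {𝒜 : Finset (Finset ℕ)} {G A B : Finset ℕ} {i j k t d : ℕ}


def ShiftedIn (G : Finset ℕ) (𝒜 : Finset (Finset ℕ)) : Prop :=
  ∀ i ∈ G, ∀ j ∈ G, i < j → UV.IsCompressed {i} {j} 𝒜

lemma measure_lt (hij : i < j) (hne : UV.compression {i} {j} 𝒜 ≠ 𝒜) :
    ω (UV.compression {i} {j} 𝒜) < ω 𝒜 := by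
  classical
  set τ : Finset ℕ → Finset ℕ := UV.compress {i} {j} with hτ
  have hdef : UV.compression {i} {j} 𝒜 =
      (𝒜.filter (fun a => τ a ∈ 𝒜)) ∪ ((𝒜.image τ).filter (fun a => a ∉ 𝒜)) := rfl
  have hF2 : (𝒜.image τ).filter (fun a => a ∉ 𝒜) = (𝒜.filter (fun a => τ a ∉ 𝒜)).image τ := by
    ext x
    simp only [Finset.mem_filter, Finset.mem_image]
    constructor
    · rintro ⟨⟨b, hb, rfl⟩, hx⟩
      exact ⟨b, ⟨hb, hx⟩, rfl⟩
    · rintro ⟨b, ⟨hb, hbx⟩, rfl⟩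
      exact ⟨⟨b, hb, rfl⟩, hbx⟩
  have hMne : (𝒜.filter (fun a => τ a ∉ 𝒜)).Nonempty := by
    rcases Finset.eq_empty_or_nonempty (𝒜.filter (fun a => τ a ∉ 𝒜)) with he | h
    · exfalso
      apply hne
      rw [hdef, hF2, he, Finset.image_empty, Finset.union_empty]
      apply Finset.filter_true_of_mem
      intro a ha
      by_contra hc
      have : a ∈ 𝒜.filter (fun a => τ a ∉ 𝒜) := Finset.mem_filter.2 ⟨ha, hc⟩
      rw [he] at this
      exact absurd this (Finset.notMem_empty a)
    · exact h
  have hinj : ∀ x ∈ 𝒜.filter (fun a => τ a ∉ 𝒜), ∀ y ∈ 𝒜.filter (fun a => τ a ∉ 𝒜),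
      τ x = τ y → x = y := by
    intro x hx y hy hxy
    exact UV.compress_injOn (Finset.mem_coe.2 hx) (Finset.mem_coe.2 hy) hxy
  have hdisj := UV.compress_disjoint (u := ({i} : Finset ℕ)) (v := ({j} : Finset ℕ)) (s := 𝒜)
  have hsum : ω (UV.compression {i} {j} 𝒜) =
      (∑ a ∈ 𝒜.filter (fun a => τ a ∈ 𝒜), ∑ x ∈ a, x) +
        ∑ a ∈ 𝒜.filter (fun a => τ a ∉ 𝒜), ∑ x ∈ τ a, x := by
    rw [ω, hdef, Finset.sum_union hdisj, hF2, Finset.sum_image hinj]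
  have hstrict : ∑ a ∈ 𝒜.filter (fun a => τ a ∉ 𝒜), ∑ x ∈ τ a, x <
      ∑ a ∈ 𝒜.filter (fun a => τ a ∉ 𝒜), ∑ x ∈ a, x := by
    apply Finset.sum_lt_sum_of_nonempty hMne
    intro a ha
    rw [Finset.mem_filter] at ha
    have hmoved : τ a ≠ a := fun h => ha.2 (by rw [h]; exact ha.1)
    obtain ⟨hia, hja⟩ := compress_moved hmoved
    rw [hτ, compress_eq (Nat.ne_of_lt hij) hia hja]
    rw [Finset.sum_insert (fun hx => hia (Finset.mem_of_mem_erase hx))]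
    have h2 : (∑ x ∈ a.erase j, x) + j = ∑ x ∈ a, x := Finset.sum_erase_add a _ hja
    omega
  rw [hsum, ω, ← Finset.sum_filter_add_sum_filter_not 𝒜 (fun a => τ a ∈ 𝒜) (fun a => ∑ x ∈ a, x)]
  omega

lemma shadow_iter_compression_subset :
    ∂^[d] (UV.compression {i} {j} 𝒜) ⊆ UV.compression {i} {j} (∂^[d] 𝒜) := by
  induction d generalizing 𝒜 with
  | zero => exact Finset.Subset.refl _
  | succ d ih =>
    rw [Function.iterate_succ_apply', Function.iterate_succ_apply']
    calc ∂ (∂^[d] (UV.compression {i} {j} 𝒜)) ⊆ ∂ (UV.compression {i} {j} (∂^[d] 𝒜)) :=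
          Finset.shadow_mono ih
      _ ⊆ UV.compression {i} {j} (∂ (∂^[d] 𝒜)) := by
          apply UV.shadow_compression_subset_compression_shadow
          intro x hx
          refine ⟨j, Finset.mem_singleton_self j, ?_⟩
          rw [Finset.mem_singleton] at hx
          subst hx
          rw [Finset.erase_singleton, Finset.erase_singleton]
          exact UV.isCompressed_self _ _

lemma card_shadow_iter_compression_le :
    (∂^[d] (UV.compression {i} {j} 𝒜)).card ≤ (∂^[d] 𝒜).card :=
  (Finset.card_le_card shadow_iter_compression_subset).trans
    (UV.card_compression _ _ _).le

lemma shift_reduce (G : Finset ℕ) (k t : ℕ) :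
    ∀ N : ℕ, ∀ 𝒜 : Finset (Finset ℕ), ω 𝒜 ≤ N → (∀ A ∈ 𝒜, A ⊆ G) → (∀ A ∈ 𝒜, A.card = k) →
    (∀ C ∈ 𝒜, ∀ D ∈ 𝒜, t ≤ (C ∩ D).card) →
    ∃ ℬ : Finset (Finset ℕ), (∀ A ∈ ℬ, A ⊆ G) ∧ (∀ A ∈ ℬ, A.card = k) ∧
      (∀ C ∈ ℬ, ∀ D ∈ ℬ, t ≤ (C ∩ D).card) ∧ ShiftedIn G ℬ ∧ ℬ.card = 𝒜.card ∧
      ∀ d, (∂^[d] ℬ).card ≤ (∂^[d] 𝒜).card := by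
  intro N
  induction N with
  | zero =>
    intro 𝒜 hω hG hs hint
    refine ⟨𝒜, hG, hs, hint, ?_, rfl, fun d => le_refl _⟩
    intro i hi j hj hij
    by_contra hne
    have := measure_lt hij hne
    omega
  | succ N ih =>
    intro 𝒜 hω hG hs hint
    by_cases hsh : ShiftedIn G 𝒜
    · exact ⟨𝒜, hG, hs, hint, hsh, rfl, fun d => le_refl _⟩
    · rw [ShiftedIn] at hsh
      push_neg at hsh
      obtain ⟨i, hi, j, hj, hij, hne⟩ := hsh
      have hlt := measure_lt hij hne
      obtain ⟨ℬ, h1, h2, h3, h4, h5, h6⟩ := ih (UV.compression {i} {j} 𝒜) (by omega)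
        (fun A hA => compress_subset hA hG hi)
        (compress_sized hs)
        (tint_compression (Nat.ne_of_lt hij) hint)
      refine ⟨ℬ, h1, h2, h3, h4, ?_, fun d => (h6 d).trans card_shadow_iter_compression_le⟩
      rw [h5, UV.card_compression]

variable {𝒜 ℬ : Finset (Finset ℕ)} {G A B : Finset ℕ} {i j k t d : ℕ}


/-- Katona's intersecting shadow theorem (in the level `k - t + 1` form). -/
theorem katona_shadow : ∀ (n : ℕ) (G : Finset ℕ), G.card ≤ n →
    ∀ (𝒜 : Finset (Finset ℕ)) (k t : ℕ), 1 ≤ t → t ≤ k →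
    (∀ A ∈ 𝒜, A ⊆ G) → (∀ A ∈ 𝒜, A.card = k) →
    (∀ C ∈ 𝒜, ∀ D ∈ 𝒜, t ≤ (C ∩ D).card) →
    𝒜.card ≤ (∂^[t-1] 𝒜).card := by
  intro n
  induction n with
  | zero =>
    intro G hGn 𝒜 k t ht htk hG hs hint
    have h𝒜 : 𝒜 = ∅ := by
      rw [Finset.eq_empty_iff_forall_notMem]
      intro A hA
      have h1 : A ⊆ G := hG A hA
      have h2 := Finset.card_le_card h1
      have h3 := hs A hA
      omega
    simp [h𝒜]
  | succ n ih =>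
    intro G hGn 𝒜 k t ht htk hG hs hint
    -- replace 𝒜 by a shifted family ℬ
    obtain ⟨ℬ, hBG, hBs, hBint, hBshift, hBcard, hBshadow⟩ :=
      shift_reduce G k t (ω 𝒜) 𝒜 le_rfl hG hs hint
    rw [← hBcard]
    refine le_trans ?_ (hBshadow (t-1))
    clear hBcard hBshadow hG hs hint
    -- now prove it for ℬ
    rcases Finset.eq_empty_or_nonempty ℬ with rfl | ⟨A₀, hA₀⟩
    · simp
    by_cases hkt : k = t
    · -- all sets are equal; family has at most one element, shadow is nonempty
      have hcard1 : ℬ.card ≤ 1 := by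
        rw [Finset.card_le_one]
        intro a ha b hb
        have h1 : t ≤ (a ∩ b).card := hBint a ha b hb
        have h2 : (a ∩ b).card ≤ a.card := Finset.card_le_card Finset.inter_subset_left
        have h3 : a ∩ b = a :=
          Finset.eq_of_subset_of_card_le Finset.inter_subset_left (by rw [hBs a ha, hkt]; exact h1)
        have h4 : (a ∩ b).card ≤ b.card := Finset.card_le_card Finset.inter_subset_right
        have h5 : a ∩ b = b :=
          Finset.eq_of_subset_of_card_le Finset.inter_subset_right (by rw [hBs b hb, hkt]; exact h1)
        rw [← h3, h5]
      have hne : (∂^[t-1] ℬ).Nonempty := by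
        obtain ⟨S, hSA, hScard⟩ := Finset.exists_subset_card_eq
          (show k - (t-1) ≤ A₀.card by rw [hBs A₀ hA₀]; omega)
        refine ⟨S, ?_⟩
        rw [Finset.mem_shadow_iterate_iff_exists_sdiff]
        refine ⟨A₀, hA₀, hSA, ?_⟩
        rw [Finset.card_sdiff_of_subset hSA, hBs A₀ hA₀, hScard]
        omega
      calc ℬ.card ≤ 1 := hcard1
        _ ≤ (∂^[t-1] ℬ).card := Finset.card_pos.2 hne
    have htk' : t + 1 ≤ k := by omega
    by_cases hsmall : G.card + t ≤ 2 * k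
    · exact katona_shadow_small hBG hBs ht htk hsmall
    -- big ground set: split on the maximum element of G
    have hGne : G.Nonempty := by
      rcases Finset.eq_empty_or_nonempty G with rfl | h
      · exfalso
        have h1 : A₀ = ∅ := Finset.subset_empty.1 (hBG A₀ hA₀)
        have h2 := hBs A₀ hA₀
        rw [h1, Finset.card_empty] at h2
        omega
      · exact h
    set g := G.max' hGne with hg
    have hgG : g ∈ G := G.max'_mem hGne
    set 𝒜₀ := ℬ.filter (fun A => ¬ g ∈ A) with h𝒜₀
    set 𝒜₁ := ℬ.filter (fun A => g ∈ A) with h𝒜₁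
    set L := 𝒜₁.image (fun A => A.erase g) with hL
    have hLinj : ∀ x ∈ 𝒜₁, ∀ y ∈ 𝒜₁, x.erase g = y.erase g → x = y := by
      intro x hx y hy hxy
      rw [h𝒜₁, Finset.mem_filter] at hx hy
      rw [← Finset.insert_erase hx.2, hxy, Finset.insert_erase hy.2]
    have hLcard : L.card = 𝒜₁.card := Finset.card_image_of_injOn hLinj
    have hLsub : ∀ S ∈ L, S ⊆ G.erase g := by
      intro S hS
      rw [hL, Finset.mem_image] at hS
      obtain ⟨A, hA, rfl⟩ := hS
      rw [h𝒜₁, Finset.mem_filter] at hA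
      exact Finset.erase_subset_erase g (hBG A hA.1)
    have hLsized : ∀ S ∈ L, S.card = k - 1 := by
      intro S hS
      rw [hL, Finset.mem_image] at hS
      obtain ⟨A, hA, rfl⟩ := hS
      rw [h𝒜₁, Finset.mem_filter] at hA
      rw [Finset.card_erase_of_mem hA.2, hBs A hA.1]
    -- the key claim: on 𝒜₁, intersections have at least t+1 elements
    have hkey : ∀ A ∈ 𝒜₁, ∀ B ∈ 𝒜₁, t + 1 ≤ (A ∩ B).card := by
      intro A hA B hB
      rw [h𝒜₁, Finset.mem_filter] at hA hB
      obtain ⟨hAB, hgA⟩ := hA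
      obtain ⟨hBB, hgB⟩ := hB
      by_contra hc
      have hABt : (A ∩ B).card = t := by
        have := hBint A hAB B hBB
        omega
      have hunion : (A ∪ B).card + t = 2 * k := by
        have h1 := Finset.card_union_add_card_inter A B
        rw [hABt, hBs A hAB, hBs B hBB] at h1
        omega
      have hABG : A ∪ B ⊆ G := Finset.union_subset (hBG A hAB) (hBG B hBB)
      have hsd : (G \ (A ∪ B)).Nonempty := by
        rw [← Finset.card_pos, Finset.card_sdiff_of_subset hABG]
        omega
      obtain ⟨i, hi⟩ := hsd
      rw [Finset.mem_sdiff] at hi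
      obtain ⟨hiG, hiAB⟩ := hi
      have hig : i < g := by
        have h1 : i ≤ g := G.le_max' i hiG
        have h2 : i ≠ g := by
          rintro rfl
          exact hiAB (Finset.mem_union_left _ hgA)
        omega
      have hcomp : UV.IsCompressed {i} {g} ℬ := hBshift i hiG g hgG hig
      have hiA : i ∉ A := fun h => hiAB (Finset.mem_union_left _ h)
      have hiB : i ∉ B := fun h => hiAB (Finset.mem_union_right _ h)
      have hA' : insert i (A.erase g) ∈ ℬ := by
        have := UV.compress_mem_compression (u := ({i} : Finset ℕ)) (v := ({g} : Finset ℕ)) hAB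
        rw [hcomp.eq] at this
        rwa [compress_eq (Nat.ne_of_lt hig) hiA hgA] at this
      have hinter : insert i (A.erase g) ∩ B = (A ∩ B).erase g := by
        ext x
        simp only [Finset.mem_inter, Finset.mem_insert, Finset.mem_erase]
        constructor
        · rintro ⟨rfl | ⟨h1, h2⟩, h3⟩
          · exact absurd h3 hiB
          · exact ⟨h1, h2, h3⟩
        · rintro ⟨h1, h2, h3⟩
          exact ⟨Or.inr ⟨h1, h2⟩, h3⟩
      have := hBint _ hA' B hBB
      rw [hinter, Finset.card_erase_of_mem (Finset.mem_inter.2 ⟨hgA, hgB⟩), hABt] at this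
      omega
    have hLint : ∀ S ∈ L, ∀ T ∈ L, t ≤ (S ∩ T).card := by
      intro S hS T hT
      rw [hL, Finset.mem_image] at hS hT
      obtain ⟨A, hA, rfl⟩ := hS
      obtain ⟨B, hB, rfl⟩ := hT
      have h1 : A.erase g ∩ B.erase g = (A ∩ B).erase g := by
        ext x
        simp only [Finset.mem_inter, Finset.mem_erase]
        tauto
      rw [h𝒜₁, Finset.mem_filter] at hA hB
      rw [h1, Finset.card_erase_of_mem (Finset.mem_inter.2 ⟨hA.2, hB.2⟩)]
      have := hkey A (Finset.mem_filter.2 hA) B (Finset.mem_filter.2 hB)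
      omega
    -- recursive calls
    have hGerase : (G.erase g).card ≤ n := by
      rw [Finset.card_erase_of_mem hgG]
      omega
    have h𝒜₀sub : ∀ A ∈ 𝒜₀, A ⊆ G.erase g := by
      intro A hA
      rw [h𝒜₀, Finset.mem_filter] at hA
      exact Finset.subset_erase.2 ⟨hBG A hA.1, hA.2⟩
    have hrec₀ : 𝒜₀.card ≤ (∂^[t-1] 𝒜₀).card :=
      ih (G.erase g) hGerase 𝒜₀ k t ht htk h𝒜₀sub
        (fun A hA => hBs A (Finset.mem_filter.1 hA).1)
        (fun C hC D hD => hBint C (Finset.mem_filter.1 hC).1 D (Finset.mem_filter.1 hD).1)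
    have hrecL : L.card ≤ (∂^[t-1] L).card :=
      ih (G.erase g) hGerase L (k-1) t ht (by omega) hLsub hLsized hLint
    -- assemble: the shadow of ℬ contains the shadow of 𝒜₀ and (insert g) of the shadow of L
    have hsub1 : ∂^[t-1] 𝒜₀ ⊆ ∂^[t-1] ℬ := shadow_iterate_mono (Finset.filter_subset _ _)
    have hgnotin : ∀ S ∈ ∂^[t-1] L, g ∉ S := by
      intro S hS
      rw [Finset.mem_shadow_iterate_iff_exists_sdiff] at hS
      obtain ⟨C, hC, hSC, -⟩ := hS
      intro hgS
      exact (Finset.mem_erase.1 (hLsub C hC (hSC hgS))).1 rfl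
    have hsub2 : (∂^[t-1] L).image (insert g) ⊆ ∂^[t-1] ℬ := by
      intro S hS
      rw [Finset.mem_image] at hS
      obtain ⟨S₀, hS₀, rfl⟩ := hS
      rw [Finset.mem_shadow_iterate_iff_exists_sdiff] at hS₀ ⊢
      obtain ⟨C, hC, hS₀C, hCcard⟩ := hS₀
      rw [hL, Finset.mem_image] at hC
      obtain ⟨A, hA, rfl⟩ := hC
      rw [h𝒜₁, Finset.mem_filter] at hA
      refine ⟨A, hA.1, ?_, ?_⟩
      · intro x hx
        rw [Finset.mem_insert] at hx
        rcases hx with rfl | hx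
        · exact hA.2
        · exact Finset.mem_of_mem_erase (hS₀C hx)
      · have heq : A \ insert g S₀ = A.erase g \ S₀ := by
          ext x
          simp only [Finset.mem_sdiff, Finset.mem_insert, Finset.mem_erase]
          tauto
        rw [heq]
        exact hCcard
    have hdisj : Disjoint (∂^[t-1] 𝒜₀) ((∂^[t-1] L).image (insert g)) := by
      rw [Finset.disjoint_left]
      intro S hS hS'
      rw [Finset.mem_image] at hS'
      obtain ⟨S₀, hS₀, rfl⟩ := hS'
      rw [Finset.mem_shadow_iterate_iff_exists_sdiff] at hS
      obtain ⟨C, hC, hSC, -⟩ := hS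
      exact (Finset.mem_filter.1 hC).2 (hSC (Finset.mem_insert_self g S₀))
    have himgcard : ((∂^[t-1] L).image (insert g)).card = (∂^[t-1] L).card := by
      apply Finset.card_image_of_injOn
      intro x hx y hy hxy
      have hgx := hgnotin x hx
      have hgy := hgnotin y hy
      rw [← Finset.erase_insert hgx, hxy, Finset.erase_insert hgy]
    have hsplit : ℬ.card = 𝒜₁.card + 𝒜₀.card := by
      rw [h𝒜₀, h𝒜₁]
      exact (Finset.card_filter_add_card_filter_not (p := fun A => g ∈ A)).symm
    calc ℬ.card = 𝒜₁.card + 𝒜₀.card := hsplit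
      _ = L.card + 𝒜₀.card := by rw [hLcard]
      _ ≤ (∂^[t-1] L).card + (∂^[t-1] 𝒜₀).card := Nat.add_le_add hrecL hrec₀
      _ = ((∂^[t-1] L).image (insert g)).card + (∂^[t-1] 𝒜₀).card := by rw [himgcard]
      _ = ((∂^[t-1] 𝒜₀) ∪ (∂^[t-1] L).image (insert g)).card := by
          rw [Finset.card_union_of_disjoint hdisj, add_comm]
      _ ≤ (∂^[t-1] ℬ).card :=
          Finset.card_le_card (Finset.union_subset hsub1 hsub2)

/-- The middle level in the odd case, via Erdős–Ko–Rado. -/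
lemma middle_level (n t k : ℕ) (hn : 1 ≤ n) (ht : 1 ≤ t) (htn : t ≤ n) (hk : n + t = 2*k+1)
    (𝒜 : Finset (Finset ℕ)) (hsub : ∀ A ∈ 𝒜, A ⊆ Finset.Icc 1 n)
    (hsized : ∀ A ∈ 𝒜, A.card = k)
    (hint : ∀ C ∈ 𝒜, ∀ D ∈ 𝒜, t ≤ (C ∩ D).card) :
    𝒜.card ≤ (n-1).choose k := by
  classical
  have hIcc : (Finset.Icc 1 n).card = n := by
    rw [Nat.card_Icc]; omega
  have htn' : t ≤ n - 1 := by
    rcases Nat.lt_or_ge t n with h | h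
    · omega
    · exfalso; omega
  set r := n - k with hr
  have hkn : k ≤ n - 1 := by omega
  have hr1 : 1 ≤ r := by omega
  -- complements
  set 𝒢 := 𝒜.image (fun A => Finset.Icc 1 n \ A) with h𝒢
  have hcompl_inj : ∀ x ∈ 𝒜, ∀ y ∈ 𝒜, Finset.Icc 1 n \ x = Finset.Icc 1 n \ y → x = y := by
    intro x hx y hy hxy
    have h1 := Finset.sdiff_sdiff_eq_self (hsub x hx)
    have h2 := Finset.sdiff_sdiff_eq_self (hsub y hy)
    rw [← h1, hxy, h2]
  have h𝒢card : 𝒢.card = 𝒜.card := Finset.card_image_of_injOn hcompl_inj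
  have h𝒢sized : ∀ C ∈ 𝒢, C.card = r := by
    intro C hC
    rw [h𝒢, Finset.mem_image] at hC
    obtain ⟨A, hA, rfl⟩ := hC
    rw [Finset.card_sdiff_of_subset (hsub A hA), hIcc, hsized A hA]
  have h𝒢sub : ∀ C ∈ 𝒢, C ⊆ Finset.Icc 1 n := by
    intro C hC
    rw [h𝒢, Finset.mem_image] at hC
    obtain ⟨A, hA, rfl⟩ := hC
    exact Finset.sdiff_subset
  have h𝒢int : ∀ C ∈ 𝒢, ∀ D ∈ 𝒢, (C ∩ D).Nonempty := by
    intro C hC D hD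
    rw [h𝒢, Finset.mem_image] at hC hD
    obtain ⟨A, hA, rfl⟩ := hC
    obtain ⟨B, hB, rfl⟩ := hD
    have heq : (Finset.Icc 1 n \ A) ∩ (Finset.Icc 1 n \ B) = Finset.Icc 1 n \ (A ∪ B) := by
      ext x
      simp only [Finset.mem_inter, Finset.mem_sdiff, Finset.mem_union]
      tauto
    rw [heq, ← Finset.card_pos, Finset.card_sdiff_of_subset (Finset.union_subset (hsub A hA) (hsub B hB)),
      hIcc]
    have h1 := Finset.card_union_add_card_inter A B
    rw [hsized A hA, hsized B hB] at h1
    have h2 := hint A hA B hB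
    have h3 : (A ∪ B).card + t ≤ 2 * k := by omega
    omega
  -- transfer to `Fin n`
  set f : ℕ → Fin n := fun x => ⟨(x - 1) % n, Nat.mod_lt _ hn⟩ with hf
  set g : Fin n → ℕ := fun a => a.val + 1 with hg
  have hgf : ∀ x ∈ Finset.Icc 1 n, g (f x) = x := by
    intro x hx
    rw [Finset.mem_Icc] at hx
    simp only [hf, hg]
    rw [Nat.mod_eq_of_lt (by omega)]
    omega
  have himg_cancel : ∀ C : Finset ℕ, C ⊆ Finset.Icc 1 n → (C.image f).image g = C := by
    intro C hC
    rw [Finset.image_image]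
    rw [show (g ∘ f) = fun x => g (f x) from rfl]
    calc C.image (fun x => g (f x)) = C.image id := Finset.image_congr (fun x hx => hgf x (hC hx))
      _ = C := Finset.image_id
  set ℋ := 𝒢.image (fun C => C.image f) with hℋ
  have hℋcard : ℋ.card = 𝒢.card := by
    apply Finset.card_image_of_injOn
    intro x hx y hy hxy
    dsimp only at hxy
    rw [← himg_cancel x (h𝒢sub x hx), hxy, himg_cancel y (h𝒢sub y hy)]
  have hℋsized : (↑ℋ : Set (Finset (Fin n))).Sized r := by
    intro C hC
    rw [Finset.mem_coe, hℋ, Finset.mem_image] at hC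
    obtain ⟨D, hD, rfl⟩ := hC
    rw [Finset.card_image_of_injOn, h𝒢sized D hD]
    intro x hx y hy hxy
    have := hgf x (h𝒢sub D hD hx)
    rw [← this, hxy, hgf y (h𝒢sub D hD hy)]
  have hℋint : (↑ℋ : Set (Finset (Fin n))).Intersecting := by
    intro C hC D hD
    rw [Finset.mem_coe, hℋ, Finset.mem_image] at hC hD
    obtain ⟨C₀, hC₀, rfl⟩ := hC
    obtain ⟨D₀, hD₀, rfl⟩ := hD
    obtain ⟨x, hx⟩ := h𝒢int C₀ hC₀ D₀ hD₀
    rw [Finset.mem_inter] at hx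
    exact Finset.not_disjoint_iff.2 ⟨f x, Finset.mem_image_of_mem f hx.1,
      Finset.mem_image_of_mem f hx.2⟩
  have hrn : r ≤ n / 2 := by omega
  have hEKR := Finset.erdos_ko_rado hℋint hℋsized hrn
  have hfinal : (n-1).choose (r-1) = (n-1).choose k := by
    have h1 : (n-1) - (r-1) = k := by omega
    rw [← h1, Nat.choose_symm (by omega)]
  calc 𝒜.card = ℋ.card := by rw [hℋcard, h𝒢card]
    _ ≤ (n-1).choose (r-1) := hEKR
    _ = (n-1).choose k := hfinal

variable {n t j : ℕ} {F : Finset (Finset ℕ)}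

lemma trivial_bound (hsub : ∀ A ∈ F, A ⊆ Finset.Icc 1 n) (m : ℕ) :
    (F.filter (fun A => A.card = m)).card ≤ n.choose m := by
  have h1 : F.filter (fun A => A.card = m) ⊆ (Finset.Icc 1 n).powersetCard m := by
    intro A hA
    rw [Finset.mem_filter] at hA
    exact Finset.mem_powersetCard.2 ⟨hsub A hA.1, hA.2⟩
  calc (F.filter (fun A => A.card = m)).card ≤ ((Finset.Icc 1 n).powersetCard m).card :=
        Finset.card_le_card h1
    _ = n.choose m := by rw [Finset.card_powersetCard, Nat.card_Icc]; norm_num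

lemma pair_bound (ht : 1 ≤ t) (hsub : ∀ A ∈ F, A ⊆ Finset.Icc 1 n)
    (hint : ∀ A ∈ F, ∀ B ∈ F, t ≤ (A ∩ B).card) (htj : t ≤ j) (hjn : j ≤ n) :
    (F.filter (fun A => A.card = j)).card + (F.filter (fun A => A.card = n + t - 1 - j)).card ≤
      n.choose (n + t - 1 - j) := by
  classical
  set m := n + t - 1 - j with hm
  set Fj := F.filter (fun A => A.card = j) with hFj
  set Fm := F.filter (fun A => A.card = m) with hFm
  have hFjsub : ∀ A ∈ Fj, A ⊆ Finset.Icc 1 n := fun A hA => hsub A (Finset.mem_filter.1 hA).1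
  have hFjsized : ∀ A ∈ Fj, A.card = j := fun A hA => (Finset.mem_filter.1 hA).2
  have hFjint : ∀ C ∈ Fj, ∀ D ∈ Fj, t ≤ (C ∩ D).card :=
    fun C hC D hD => hint C (Finset.mem_filter.1 hC).1 D (Finset.mem_filter.1 hD).1
  set 𝒮 := ∂^[t-1] Fj with h𝒮
  have h1 : Fj.card ≤ 𝒮.card :=
    katona_shadow (Finset.Icc 1 n).card (Finset.Icc 1 n) le_rfl Fj j t ht htj
      hFjsub hFjsized hFjint
  have h𝒮sub : ∀ S ∈ 𝒮, S ⊆ Finset.Icc 1 n := by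
    intro S hS
    rw [h𝒮, Finset.mem_shadow_iterate_iff_exists_sdiff] at hS
    obtain ⟨A, hA, hSA, -⟩ := hS
    exact hSA.trans (hFjsub A hA)
  have h𝒮sized : ∀ S ∈ 𝒮, S.card = j - (t-1) := by
    intro S hS
    rw [h𝒮, Finset.mem_shadow_iterate_iff_exists_sdiff] at hS
    obtain ⟨A, hA, hSA, hc⟩ := hS
    have h2 := Finset.card_sdiff_of_subset hSA
    have h3 := Finset.card_le_card hSA
    have h4 := hFjsized A hA
    omega
  set 𝒮c := 𝒮.image (fun S => Finset.Icc 1 n \ S) with h𝒮c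
  have h𝒮ccard : 𝒮c.card = 𝒮.card := by
    apply Finset.card_image_of_injOn
    intro x hx y hy hxy
    dsimp only at hxy
    rw [← Finset.sdiff_sdiff_eq_self (h𝒮sub x hx), hxy, Finset.sdiff_sdiff_eq_self (h𝒮sub y hy)]
  have hIcc : (Finset.Icc 1 n).card = n := by rw [Nat.card_Icc]; omega
  have h𝒮csub : 𝒮c ⊆ (Finset.Icc 1 n).powersetCard m := by
    intro X hX
    rw [h𝒮c, Finset.mem_image] at hX
    obtain ⟨S, hS, rfl⟩ := hX
    refine Finset.mem_powersetCard.2 ⟨Finset.sdiff_subset, ?_⟩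
    rw [Finset.card_sdiff_of_subset (h𝒮sub S hS), hIcc, h𝒮sized S hS]
    omega
  have hFmsub : Fm ⊆ (Finset.Icc 1 n).powersetCard m := by
    intro A hA
    rw [hFm, Finset.mem_filter] at hA
    exact Finset.mem_powersetCard.2 ⟨hsub A hA.1, hA.2⟩
  have hdisj : Disjoint 𝒮c Fm := by
    rw [Finset.disjoint_left]
    intro X hX hXF
    rw [h𝒮c, Finset.mem_image] at hX
    obtain ⟨S, hS, rfl⟩ := hX
    rw [h𝒮, Finset.mem_shadow_iterate_iff_exists_sdiff] at hS
    obtain ⟨A, hA, hSA, hc⟩ := hS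
    have hAF : A ∈ F := (Finset.mem_filter.1 hA).1
    have hXF' : Finset.Icc 1 n \ S ∈ F := (Finset.mem_filter.1 hXF).1
    have h2 := hint A hAF _ hXF'
    have heq : A ∩ (Finset.Icc 1 n \ S) = A \ S := by
      ext x
      simp only [Finset.mem_inter, Finset.mem_sdiff]
      constructor
      · rintro ⟨h3, -, h4⟩; exact ⟨h3, h4⟩
      · rintro ⟨h3, h4⟩; exact ⟨h3, hFjsub A hA h3, h4⟩
    rw [heq, hc] at h2
    omega
  calc Fj.card + Fm.card ≤ 𝒮c.card + Fm.card := by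
        rw [h𝒮ccard]; exact Nat.add_le_add_right h1 _
    _ = (𝒮c ∪ Fm).card := (Finset.card_union_of_disjoint hdisj).symm
    _ ≤ ((Finset.Icc 1 n).powersetCard m).card :=
        Finset.card_le_card (Finset.union_subset h𝒮csub hFmsub)
    _ = n.choose m := by rw [Finset.card_powersetCard, hIcc]

lemma pair_bound' (ht : 1 ≤ t) (htn : t ≤ n) (hsub : ∀ A ∈ F, A ⊆ Finset.Icc 1 n)
    (hint : ∀ A ∈ F, ∀ B ∈ F, t ≤ (A ∩ B).card) (hj : 2*j < n + t) :
    (F.filter (fun A => A.card = j)).card + (F.filter (fun A => A.card = n + t - 1 - j)).card ≤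
      n.choose (n + t - 1 - j) := by
  by_cases htj : t ≤ j
  · exact pair_bound ht hsub hint htj (by omega)
  · have hempty : F.filter (fun A => A.card = j) = ∅ := by
      rw [Finset.eq_empty_iff_forall_notMem]
      intro A hA
      rw [Finset.mem_filter] at hA
      have h1 := hint A hA.1 A hA.1
      rw [Finset.inter_self] at h1
      omega
    rw [hempty, Finset.card_empty, Nat.zero_add]
    exact trivial_bound hsub _

variable {n t j : ℕ} {F : Finset (Finset ℕ)}

end KatonaProof

/-- **Katona's t-intersecting theorem.** Let `t ≥ 1` and let `F` be a
`t`-intersecting family of subsets of `[n]`. If `n + t` is even then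
`|F| ≤ Σ_{i=(n+t)/2}^{n} C(n,i)`; if `n + t` is odd then
`|F| ≤ Σ_{i=(n+t+1)/2}^{n} C(n,i) + C(n-1, (n+t-1)/2)`. -/
theorem katona_t_intersecting (n t : ℕ) (ht : 1 ≤ t) (F : Finset (Finset ℕ))
    (hsub : ∀ A ∈ F, A ⊆ Finset.Icc 1 n)
    (hint : ∀ A ∈ F, ∀ B ∈ F, t ≤ (A ∩ B).card) :
    (Even (n + t) →
      F.card ≤ ∑ i ∈ Finset.Icc ((n + t) / 2) n, n.choose i) ∧
    (Odd (n + t) →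
      F.card ≤ (∑ i ∈ Finset.Icc ((n + t + 1) / 2) n, n.choose i)
        + (n - 1).choose ((n + t - 1) / 2)) := by
  classical
  by_cases htn : t ≤ n
  swap
  · have hF : F = ∅ := by
      rw [Finset.eq_empty_iff_forall_notMem]
      intro A hA
      have h1 := hint A hA A hA
      rw [Finset.inter_self] at h1
      have h2 := Finset.card_le_card (hsub A hA)
      rw [Nat.card_Icc] at h2
      omega
    subst hF
    simp
  set Fl : ℕ → Finset (Finset ℕ) := fun j => F.filter (fun A => A.card = j) with hFl
  have htotal : F.card = ∑ j ∈ Finset.range (n+1), (Fl j).card := by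
    apply Finset.card_eq_sum_card_fiberwise
    intro A hA
    rw [Finset.mem_coe, Finset.mem_range]
    have h2 := Finset.card_le_card (hsub A hA)
    rw [Nat.card_Icc] at h2
    omega
  have hzero : ∀ m, n < m → (Fl m).card = 0 := by
    intro m hm
    rw [Finset.card_eq_zero, hFl, Finset.eq_empty_iff_forall_notMem]
    intro A hA
    rw [Finset.mem_filter] at hA
    have h2 := Finset.card_le_card (hsub A hA.1)
    rw [Nat.card_Icc] at h2
    omega
  -- the common low/high estimate
  have main_bound : ∀ K : ℕ, 2*K ≤ n + t → t ≤ K + 1 →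
      (∑ j ∈ Finset.Ico 0 K, (Fl j).card) + (∑ m ∈ Finset.Ico (n+t-K) (n+1), (Fl m).card) ≤
        ∑ m ∈ Finset.Ico (n+t-K) (n+1), n.choose m := by
    intro K hK1 hK2
    have hsub1 : Finset.Ico (n+t-K) (n+1) ⊆ Finset.Ico (n+t-K) (n+t) := by
      apply Finset.Ico_subset_Ico le_rfl
      omega
    have hext : ∑ m ∈ Finset.Ico (n+t-K) (n+1), (Fl m).card
        = ∑ m ∈ Finset.Ico (n+t-K) (n+t), (Fl m).card := by
      apply Finset.sum_subset hsub1
      intro m hm1 hm2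
      rw [Finset.mem_Ico] at hm1 hm2
      exact hzero m (by omega)
    have hre : ∑ m ∈ Finset.Ico (n+t-K) (n+t), (Fl m).card
        = ∑ j ∈ Finset.Ico 0 K, (Fl (n+t-1-j)).card := by
      apply Finset.sum_nbij' (fun m => n+t-1-m) (fun a => n+t-1-a)
      · intro a ha; rw [Finset.mem_Ico] at ha ⊢; omega
      · intro a ha; rw [Finset.mem_Ico] at ha ⊢; omega
      · intro a ha; rw [Finset.mem_Ico] at ha; omega
      · intro a ha; rw [Finset.mem_Ico] at ha; omega
      · intro a ha
        rw [Finset.mem_Ico] at ha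
        have he : n+t-1-(n+t-1-a) = a := by omega
        rw [he]
    have hre2 : ∑ m ∈ Finset.Ico (n+t-K) (n+t), n.choose m
        = ∑ j ∈ Finset.Ico 0 K, n.choose (n+t-1-j) := by
      apply Finset.sum_nbij' (fun m => n+t-1-m) (fun a => n+t-1-a)
      · intro a ha; rw [Finset.mem_Ico] at ha ⊢; omega
      · intro a ha; rw [Finset.mem_Ico] at ha ⊢; omega
      · intro a ha; rw [Finset.mem_Ico] at ha; omega
      · intro a ha; rw [Finset.mem_Ico] at ha; omega
      · intro a ha
        rw [Finset.mem_Ico] at ha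
        have he : n+t-1-(n+t-1-a) = a := by omega
        rw [he]
    have hext2 : ∑ m ∈ Finset.Ico (n+t-K) (n+1), n.choose m
        = ∑ m ∈ Finset.Ico (n+t-K) (n+t), n.choose m := by
      apply Finset.sum_subset hsub1
      intro m hm1 hm2
      rw [Finset.mem_Ico] at hm1 hm2
      exact Nat.choose_eq_zero_of_lt (by omega)
    rw [hext, hre, hext2, hre2, ← Finset.sum_add_distrib]
    apply Finset.sum_le_sum
    intro j hj
    rw [Finset.mem_Ico] at hj
    exact KatonaProof.pair_bound' ht htn hsub hint (by omega)
  constructor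
  · -- even case
    intro heven
    obtain ⟨k, hk⟩ : ∃ k, n + t = 2 * k := by
      obtain ⟨k, hk⟩ := heven
      exact ⟨k, by omega⟩
    have hsplit : F.card = (∑ j ∈ Finset.Ico 0 k, (Fl j).card) +
        ∑ m ∈ Finset.Ico k (n+1), (Fl m).card := by
      rw [htotal, Finset.range_eq_Ico]
      rw [Finset.sum_Ico_consecutive _ (Nat.zero_le k) (by omega)]
    have hgoal : (n + t) / 2 = k := by omega
    rw [hgoal, ← Finset.Ico_add_one_right_eq_Icc]
    have hK := main_bound k (by omega) (by omega)
    have he : n + t - k = k := by omega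
    rw [he] at hK
    omega
  · -- odd case
    intro hodd
    obtain ⟨k, hk⟩ : ∃ k, n + t = 2 * k + 1 := hodd
    have htn' : t ≤ n - 1 := by
      rcases Nat.lt_or_ge t n with h | h
      · omega
      · exfalso; omega
    have hsplit : F.card = (∑ j ∈ Finset.Ico 0 k, (Fl j).card) +
        ((Fl k).card + ∑ m ∈ Finset.Ico (k+1) (n+1), (Fl m).card) := by
      rw [htotal, Finset.range_eq_Ico]
      rw [← Finset.sum_Ico_consecutive (fun m => (Fl m).card) (Nat.zero_le k) (show k ≤ n+1 by omega)]
      rw [← Finset.sum_Ico_consecutive (fun m => (Fl m).card) (show k ≤ k+1 by omega) (show k+1 ≤ n+1 by omega)]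
      rw [Nat.Ico_succ_singleton, Finset.sum_singleton]
    have hmid : (Fl k).card ≤ (n-1).choose k := by
      apply KatonaProof.middle_level n t k (by omega) ht htn (by omega)
      · intro A hA; exact hsub A (Finset.mem_filter.1 hA).1
      · intro A hA; exact (Finset.mem_filter.1 hA).2
      · intro C hC D hD; exact hint C (Finset.mem_filter.1 hC).1 D (Finset.mem_filter.1 hD).1
    have hK := main_bound k (by omega) (by omega)
    have he : n + t - k = k + 1 := by omega
    rw [he] at hK
    have hgoal1 : (n + t + 1) / 2 = k + 1 := by omega
    have hgoal2 : (n + t - 1) / 2 = k := by omega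
    rw [hgoal1, hgoal2, ← Finset.Ico_add_one_right_eq_Icc]
    omega
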